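/- For a binary rooted labeled tree S with n leaves, every maximal chain in the lattice of root ancestral configurations of S has length exactly n−1 (i.e., contains n−1 elements), starting at the minimal configuration of all n leaves and ending at the maximal configuration consisting of the two children of the root. -/

import Mathlib

/-- Binary rooted trees (leaf labels abstracted away; leaves are identified
by their positions, encoded as lists of booleans). -/
inductive BTree : Type
  | leaf : BTree
  | node : BTree → BTree → BTree
  deriving DecidableEq

namespace BTree

/-- A position in a binary tree: a path from the root, `false` = left, `true` = right. -/
abbrev Pos := List Bool

/-- The subtree rooted at a position (junk value `leaf` below a leaf). -/
def subtreeAt : BTree → Pos → BTree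
  | t, [] => t
  | leaf, _ :: _ => leaf
  | node l _, false :: p => subtreeAt l p
  | node _ r, true :: p => subtreeAt r p

/-- `p` is a valid position (node) of the tree. -/
def isValidPos : BTree → Pos → Prop
  | _, [] => True
  | leaf, _ :: _ => False
  | node l _, false :: p => isValidPos l p
  | node _ r, true :: p => isValidPos r p

/-- The set of positions of the leaves of a tree. -/
def leafPositions : BTree → Finset Pos
  | leaf => {([] : Pos)}
  | node l r =>
      (leafPositions l).image (false :: ·) ∪ (leafPositions r).image (true :: ·)

/-- The number of leaves of a tree. -/
def numLeaves (t : BTree) : ℕ := (leafPositions t).card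

/-- The set of positions of the internal (non-leaf) nodes of a tree. -/
def internalPos : BTree → Finset Pos
  | leaf => ∅
  | node l r =>
      insert ([] : Pos)
        ((internalPos l).image (false :: ·) ∪ (internalPos r).image (true :: ·))

/-- A root ancestral configuration of `S`: an antichain of non-root nodes of `S`
whose descendant-leaf sets partition the leaf set, i.e. a set of valid non-root
positions such that every leaf position has exactly one weak ancestor in the set. -/
def IsConfig (S : BTree) (A : Finset Pos) : Prop :=
  (∀ p ∈ A, isValidPos S p ∧ p ≠ []) ∧
  ∀ q ∈ leafPositions S, ∃! p, p ∈ A ∧ p <+: q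

/-- The partial order on configurations: `ConfigLE A B` (that is, `A ≺ B`) iff `B`
is obtained from `A` by coalescing some (possibly no) pairs of lineages;
equivalently, every node of `A` is a weak descendant of some node of `B`. -/
def ConfigLE (A B : Finset Pos) : Prop :=
  ∀ p ∈ A, ∃ q ∈ B, q <+: p

/-- The covering relation on root ancestral configurations of `S`. -/
def Covers (S : BTree) (A B : Finset Pos) : Prop :=
  IsConfig S A ∧ IsConfig S B ∧ ConfigLE A B ∧ A ≠ B ∧
  ∀ C, IsConfig S C → ConfigLE A C → ConfigLE C B → C = A ∨ C = B

/-- The maximal root configuration: the two children of the root. -/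
def rootConfig : Finset Pos := {[false], [true]}

/-- The number of root ancestral configurations of `S`. -/
noncomputable def numConfigs (S : BTree) : ℕ := Nat.card {A : Finset Pos // IsConfig S A}

/-- A labeled history of `S`: a linear ordering of the internal nodes of `S`
in which every internal node appears after all of its internal descendants. -/
def IsLabHist (S : BTree) (L : List Pos) : Prop :=
  L.Nodup ∧ (∀ p, p ∈ L ↔ p ∈ internalPos S) ∧
  ∀ i j : Fin L.length, L.get i <+: L.get j → (j : ℕ) ≤ (i : ℕ)

/-- The number of labeled histories of `S`. -/
noncomputable def numHist (S : BTree) : ℕ := Nat.card {L : List Pos // IsLabHist S L}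

/-- The caterpillar tree on `n` leaves (`caterpillar 1` is a single leaf). -/
def caterpillar : ℕ → BTree
  | 0 => leaf
  | 1 => leaf
  | n + 2 => node (caterpillar (n + 1)) leaf

lemma subtreeAt_leaf (p : Pos) : subtreeAt leaf p = leaf := by
  cases p <;> rfl

lemma isValidPos_append {S : BTree} {p q : Pos} :
    isValidPos S (p ++ q) ↔ isValidPos S p ∧ isValidPos (subtreeAt S p) q := by
  induction p generalizing S with
  | nil => simp [isValidPos, subtreeAt]
  | cons b p ih =>
      cases S with
      | leaf => cases b <;> simp [isValidPos, subtreeAt, subtreeAt_leaf]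
      | node l r => cases b <;> simp [isValidPos, subtreeAt, ih]

lemma mem_leafPositions {S : BTree} {q : Pos} :
    q ∈ leafPositions S ↔ isValidPos S q ∧ subtreeAt S q = leaf := by
  induction S generalizing q with
  | leaf =>
      cases q with
      | nil => simp [leafPositions, isValidPos, subtreeAt]
      | cons b p => simp [leafPositions, isValidPos, subtreeAt]
  | node l r ihl ihr =>
      cases q with
      | nil => simp [leafPositions, isValidPos, subtreeAt]
      | cons b p =>
          cases b <;> simp [leafPositions, isValidPos, subtreeAt, ihl, ihr]

lemma exists_leaf_below {S : BTree} {p : Pos} (h : isValidPos S p) :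
    ∃ ℓ ∈ leafPositions S, p <+: ℓ := by
  induction S generalizing p with
  | leaf =>
      cases p with
      | nil => exact ⟨[], by simp [leafPositions], List.prefix_refl _⟩
      | cons b p => exact absurd h (by cases b <;> simp [isValidPos])
  | node l r ihl ihr =>
      cases p with
      | nil =>
          obtain ⟨ℓ, hℓ, -⟩ := ihl (p := []) (by simp [isValidPos])
          refine ⟨false :: ℓ, ?_, List.nil_prefix⟩
          simp only [leafPositions, Finset.mem_union, Finset.mem_image]
          exact Or.inl ⟨ℓ, hℓ, rfl⟩
      | cons b p =>
          cases b with
          | false =>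
              obtain ⟨ℓ, hℓ, hpre⟩ := ihl h
              refine ⟨false :: ℓ, ?_, by simpa [List.cons_prefix_cons] using hpre⟩
              simp only [leafPositions, Finset.mem_union, Finset.mem_image]
              exact Or.inl ⟨ℓ, hℓ, rfl⟩
          | true =>
              obtain ⟨ℓ, hℓ, hpre⟩ := ihr h
              refine ⟨true :: ℓ, ?_, by simpa [List.cons_prefix_cons] using hpre⟩
              simp only [leafPositions, Finset.mem_union, Finset.mem_image]
              exact Or.inr ⟨ℓ, hℓ, rfl⟩

lemma prefix_valid {S : BTree} {p q : Pos} (h : isValidPos S p) (hq : q <+: p) :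
    isValidPos S q := by
  obtain ⟨t, rfl⟩ := hq
  exact (isValidPos_append.mp h).1

lemma config_unique {S : BTree} {A : Finset Pos} (hA : IsConfig S A) {ℓ p p' : Pos}
    (hℓ : ℓ ∈ leafPositions S) (hp : p ∈ A) (h1 : p <+: ℓ) (hp' : p' ∈ A)
    (h2 : p' <+: ℓ) : p = p' := by
  obtain ⟨x, -, hx⟩ := hA.2 ℓ hℓ
  rw [hx p ⟨hp, h1⟩, hx p' ⟨hp', h2⟩]

lemma config_antichain {S : BTree} {A : Finset Pos} (hA : IsConfig S A) {p p' : Pos}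
    (hp : p ∈ A) (hp' : p' ∈ A) (hpre : p <+: p') : p = p' := by
  obtain ⟨ℓ, hℓ, hl⟩ := exists_leaf_below (hA.1 p' hp').1
  exact config_unique hA hℓ hp (hpre.trans hl) hp' hl

noncomputable def anc (B : Finset Pos) (p : Pos) : Pos :=
  if h : ∃ q ∈ B, q <+: p then h.choose else []

lemma anc_spec {B : Finset Pos} {p : Pos} (h : ∃ q ∈ B, q <+: p) :
    anc B p ∈ B ∧ anc B p <+: p := by
  rw [anc, dif_pos h]
  exact ⟨h.choose_spec.1, h.choose_spec.2⟩

lemma anc_eq {S : BTree} {B : Finset Pos} (hB : IsConfig S B) {ℓ p q' : Pos}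
    (hℓ : ℓ ∈ leafPositions S) (hpl : p <+: ℓ) (hex : ∃ q ∈ B, q <+: p)
    (hq' : q' ∈ B) (hq'l : q' <+: ℓ) : anc B p = q' :=
  config_unique hB hℓ (anc_spec hex).1 ((anc_spec hex).2.trans hpl) hq' hq'l

lemma config_subset_eq {S : BTree} {A B : Finset Pos} (hA : IsConfig S A)
    (hB : IsConfig S B) (hsub : A ⊆ B) : A = B := by
  refine Finset.Subset.antisymm hsub fun q hq => ?_
  obtain ⟨ℓ, hℓ, hql⟩ := exists_leaf_below (hB.1 q hq).1
  obtain ⟨p, ⟨hpA, hpl⟩, -⟩ := hA.2 ℓ hℓ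
  exact (config_unique hB hℓ (hsub hpA) hpl hq hql) ▸ hpA

lemma sibling_valid {S : BTree} {s : Pos} {b b' : Bool}
    (h : isValidPos S (s ++ [b])) : isValidPos S (s ++ [b']) := by
  rw [isValidPos_append] at h ⊢
  refine ⟨h.1, ?_⟩
  rcases h with ⟨-, h2⟩
  cases hs : subtreeAt S s with
  | leaf => rw [hs] at h2; cases b <;> exact absurd h2 (by simp [isValidPos])
  | node l r => cases b' <;> simp [isValidPos]

lemma configLE_card_lt {S : BTree} {A B : Finset Pos} (hA : IsConfig S A)
    (hB : IsConfig S B) (hle : ConfigLE A B) (hne : A ≠ B) : B.card < A.card := by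
  have hns : ¬ A ⊆ B := fun h => hne (config_subset_eq hA hB h)
  obtain ⟨p, hpA, hpB⟩ := Finset.not_subset.mp hns
  have hexp : ∃ q ∈ B, q <+: p := hle p hpA
  have hqB := (anc_spec hexp).1
  have hqp := (anc_spec hexp).2
  set q := anc B p with hq
  have hqne : q ≠ p := fun h => hpB (h ▸ hqB)
  obtain ⟨t, ht⟩ := hqp
  rcases t with - | ⟨b, rest⟩
  · exact absurd (by simpa using ht) hqne
  · have hvb : isValidPos S (q ++ [b]) :=
      prefix_valid (hA.1 p hpA).1 ⟨rest, by simpa using ht⟩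
    have hvb' : isValidPos S (q ++ [!b]) := sibling_valid hvb
    obtain ⟨ℓ', hℓ', hql'⟩ := exists_leaf_below hvb'
    obtain ⟨p'', ⟨hp''A, hp''ℓ⟩, -⟩ := hA.2 ℓ' hℓ'
    have hqℓ' : q <+: ℓ' := (List.prefix_append q [!b]).trans hql'
    have hanc'' : anc B p'' = q := anc_eq hB hℓ' hp''ℓ (hle p'' hp''A) hqB hqℓ'
    have hp''ne : p'' ≠ p := by
      rintro rfl
      obtain ⟨t2, ht2⟩ := hql'
      rw [← ht, ← ht2] at hp''ℓ
      rw [List.append_assoc, List.prefix_append_right_inj] at hp''ℓ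
      rw [List.singleton_append, List.cons_prefix_cons] at hp''ℓ
      simp at hp''ℓ
    have hsub : B ⊆ (A.erase p).image (anc B) := by
      intro q' hq'
      by_cases hq'q : q' = q
      · subst hq'q
        exact Finset.mem_image.mpr ⟨p'', Finset.mem_erase.mpr ⟨hp''ne, hp''A⟩, hanc''⟩
      · obtain ⟨ℓq, hℓq, hql⟩ := exists_leaf_below (hB.1 q' hq').1
        obtain ⟨a, ⟨haA, hal⟩, -⟩ := hA.2 ℓq hℓq
        have h2 : anc B a = q' := anc_eq hB hℓq hal (hle a haA) hq' hql
        refine Finset.mem_image.mpr ⟨a, Finset.mem_erase.mpr ⟨?_, haA⟩, h2⟩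
        rintro rfl
        exact hq'q (h2 ▸ hq.symm)
    calc B.card ≤ ((A.erase p).image (anc B)).card := Finset.card_le_card hsub
      _ ≤ (A.erase p).card := Finset.card_image_le
      _ < A.card := by
          rw [Finset.card_erase_of_mem hpA]
          exact Nat.sub_lt (Finset.card_pos.mpr ⟨p, hpA⟩) one_pos


lemma covers_card {S : BTree} {A B : Finset Pos} (h : Covers S A B) :
    A.card = B.card + 1 := by
  obtain ⟨hA, hB, hle, hne, hmax⟩ := h
  have hlt : B.card < A.card := configLE_card_lt hA hB hle hne
  by_contra hcard
  have h2 : B.card + 2 ≤ A.card := by omega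
  have hmaps : ∀ a ∈ A, anc B a ∈ B := fun a ha => (anc_spec (hle a ha)).1
  obtain ⟨p, hpA, p', hp'A, hpp', heq⟩ :=
    Finset.exists_ne_map_eq_of_card_lt_of_maps_to hlt hmaps
  set q := anc B p with hqdef
  have hqB : q ∈ B := hmaps p hpA
  have hqp : q <+: p := (anc_spec (hle p hpA)).2
  have hqp' : q <+: p' := heq ▸ (anc_spec (hle p' hp'A)).2
  have hqne : q ≠ [] := (hB.1 q hqB).2
  have hqA : q ∉ A := by
    intro hqA
    exact hpp'
      ((config_antichain hA hqA hpA hqp).symm.trans (config_antichain hA hqA hp'A hqp'))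
  set F := A.filter (fun x => q <+: x) with hF
  have hpF : p ∈ F := Finset.mem_filter.mpr ⟨hpA, hqp⟩
  obtain ⟨m, hmF, hmax_len⟩ := F.exists_max_image (fun x => x.length) ⟨p, hpF⟩
  have hmA : m ∈ A := (Finset.mem_filter.mp hmF).1
  have hqm : q <+: m := (Finset.mem_filter.mp hmF).2
  have hmq : m ≠ q := fun h => hqA (h ▸ hmA)
  have hmnil : m ≠ [] := by
    rintro rfl
    exact hqne (List.prefix_nil.mp hqm)
  obtain ⟨s0, b, hm⟩ := (List.eq_nil_or_concat m).resolve_left hmnil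
  rw [List.concat_eq_append] at hm
  subst hm
  have hqs0 : q <+: s0 := by
    rcases List.prefix_concat_iff.mp hqm with h | h
    · exact absurd h.symm hmq
    · exact h
  have hs0m : s0 <+: s0 ++ [b] := List.prefix_append _ _
  have hs0A : s0 ∉ A := by
    intro hs0A
    have h3 := config_antichain hA hs0A hmA hs0m
    simp at h3
  have hs0nil : s0 ≠ [] := by
    rintro rfl
    exact hqne (List.prefix_nil.mp hqs0)
  have hvm : isValidPos S (s0 ++ [b]) := (hA.1 _ hmA).1
  have hvm' : isValidPos S (s0 ++ [!b]) := sibling_valid hvm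
  have hvs0 : isValidPos S s0 := prefix_valid hvm hs0m
  set m' := s0 ++ [!b] with hm'def
  have hm'ne : m' ≠ s0 ++ [b] := by simp [hm'def]
  obtain ⟨ℓ', hℓ', hm'ℓ⟩ := exists_leaf_below hvm'
  obtain ⟨a, ⟨haA, haℓ⟩, -⟩ := hA.2 ℓ' hℓ'
  have hm'A : m' ∈ A := by
    rcases List.prefix_or_prefix_of_prefix haℓ hm'ℓ with hc | hc
    · rcases List.prefix_concat_iff.mp (show a <+: s0 ++ [!b] from hc) with h | h
      · rw [← hm'def] at h
        exact h ▸ haA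
      · exfalso
        have h4 := config_antichain hA haA hmA (h.trans hs0m)
        have hlen := h.length_le
        rw [h4] at hlen
        simp at hlen
    · have haF : a ∈ F :=
        Finset.mem_filter.mpr ⟨haA, (hqs0.trans (List.prefix_append s0 [!b])).trans hc⟩
      have hlen1 : a.length ≤ (s0 ++ [b]).length := hmax_len a haF
      have hlen2 : m'.length ≤ a.length := hc.length_le
      have h5 : m' = a := hc.eq_of_length (by simp [hm'def] at hlen1 hlen2 ⊢; omega)
      exact h5 ▸ haA
  set C := insert s0 ((A.erase (s0 ++ [b])).erase m') with hCdef
  have hmm' : (s0 ++ [b]) ≠ m' := fun h => hm'ne h.symm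
  have hs0C : s0 ∈ C := Finset.mem_insert_self _ _
  have hs0notE : s0 ∉ (A.erase (s0 ++ [b])).erase m' := fun h =>
    hs0A (Finset.mem_of_mem_erase (Finset.mem_of_mem_erase h))
  have hm'E : m' ∈ A.erase (s0 ++ [b]) := Finset.mem_erase.mpr ⟨hm'ne, hm'A⟩
  have hA2 : 2 ≤ A.card := Finset.one_lt_card.mpr ⟨_, hmA, _, hm'A, hmm'⟩
  have hcardC : C.card = A.card - 1 := by
    rw [hCdef, Finset.card_insert_of_notMem hs0notE, Finset.card_erase_of_mem hm'E,
      Finset.card_erase_of_mem hmA]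
    omega
  have hmemC : ∀ c, c ∈ C ↔ c = s0 ∨ (c ∈ A ∧ c ≠ s0 ++ [b] ∧ c ≠ m') := by
    intro c
    simp only [hCdef, Finset.mem_insert, Finset.mem_erase]
    tauto
  have hs0internal : ∀ ℓ ∈ leafPositions S, s0 <+: ℓ → ∃ b2, s0 ++ [b2] <+: ℓ := by
    intro ℓ hℓ hsl
    obtain ⟨t, rfl⟩ := hsl
    rcases t with - | ⟨b2, t⟩
    · exfalso
      have hleaf := (mem_leafPositions.mp hℓ).2
      rw [List.append_nil] at hleaf
      rw [isValidPos_append, hleaf] at hvm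
      exact absurd hvm.2 (by cases b <;> simp [isValidPos])
    · exact ⟨b2, ⟨t, by simp⟩⟩
  have hCcfg : IsConfig S C := by
    constructor
    · intro c hc
      rcases (hmemC c).mp hc with rfl | ⟨hcA, -, -⟩
      · exact ⟨hvs0, hs0nil⟩
      · exact hA.1 c hcA
    · intro ℓ hℓ
      obtain ⟨a2, ⟨ha2A, ha2ℓ⟩, ha2u⟩ := hA.2 ℓ hℓ
      by_cases hcase : a2 = s0 ++ [b] ∨ a2 = m'
      · refine ⟨s0, ⟨hs0C, ?_⟩, ?_⟩
        · rcases hcase with h | h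
          · rw [h] at ha2ℓ; exact hs0m.trans ha2ℓ
          · rw [h] at ha2ℓ; exact (List.prefix_append s0 [!b]).trans ha2ℓ
        · rintro c ⟨hcC, hcℓ⟩
          rcases (hmemC c).mp hcC with rfl | ⟨hcA, hne1, hne2⟩
          · rfl
          · exfalso
            have h6 := ha2u c ⟨hcA, hcℓ⟩
            rcases hcase with h | h
            · exact hne1 (h6.trans h)
            · exact hne2 (h6.trans h)
      · push_neg at hcase
        refine ⟨a2, ⟨(hmemC a2).mpr (Or.inr ⟨ha2A, hcase.1, hcase.2⟩), ha2ℓ⟩, ?_⟩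
        rintro c ⟨hcC, hcℓ⟩
        rcases (hmemC c).mp hcC with rfl | ⟨hcA, -, -⟩
        · exfalso
          obtain ⟨b2, hb2⟩ := hs0internal ℓ hℓ hcℓ
          have hb2cases : b2 = b ∨ b2 = !b := by cases b2 <;> cases b <;> simp
          rcases hb2cases with rfl | rfl
          · exact hcase.1 ((ha2u _ ⟨hmA, hb2⟩).symm)
          · exact hcase.2 ((ha2u _ ⟨hm'A, hb2⟩).symm)
        · exact ha2u c ⟨hcA, hcℓ⟩
  have hAC : ConfigLE A C := by
    intro x hx
    by_cases h1 : x = s0 ++ [b]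
    · exact ⟨s0, hs0C, by rw [h1]; exact hs0m⟩
    · by_cases h2x : x = m'
      · exact ⟨s0, hs0C, by rw [h2x]; exact List.prefix_append s0 [!b]⟩
      · exact ⟨x, (hmemC x).mpr (Or.inr ⟨hx, h1, h2x⟩), List.prefix_refl _⟩
  have hCB : ConfigLE C B := by
    intro c hc
    rcases (hmemC c).mp hc with rfl | ⟨hcA, -, -⟩
    · exact ⟨q, hqB, hqs0⟩
    · exact hle c hcA
  rcases hmax C hCcfg hAC hCB with h | h
  · exact hs0A (h ▸ hs0C)
  · rw [h] at hcardC
    omega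


lemma chain_card {S : BTree} : ∀ (L : List (Finset Pos)), L.Chain' (Covers S) →
    ∀ (hne : L ≠ []), (L.getLast hne).card + L.length = (L.head hne).card + 1
  | [], _, hne => absurd rfl hne
  | [A], _, _ => by simp
  | A :: B :: rest, hch, _ => by
      have hcov : Covers S A B := (List.isChain_cons_cons.mp hch).1
      have htail := chain_card (B :: rest) (List.isChain_cons_cons.mp hch).2 (by simp)
      have hc := covers_card hcov
      rw [List.getLast_cons (by simp : B :: rest ≠ [])]
      simp only [List.head_cons, List.length_cons] at *
      omega

end BTree

open BTree

/-- Every maximal chain in the lattice of root ancestral configurations of a binary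
rooted tree with `n` leaves — i.e. every saturated chain from the all-leaves
configuration to the two-children-of-the-root configuration — has exactly `n - 1`
elements. -/
theorem maximal_chain_length (l r : BTree) (L : List (Finset Pos))
    (hcfg : ∀ A ∈ L, IsConfig (node l r) A)
    (hhead : L.head? = some (leafPositions (node l r)))
    (hlast : L.getLast? = some rootConfig)
    (hchain : L.Chain' (Covers (node l r))) :
    L.length = numLeaves (node l r) - 1 := by
  have hne : L ≠ [] := by rintro rfl; simp at hhead
  have hhead' : L.head hne = leafPositions (node l r) := by
    rw [List.head?_eq_head hne] at hhead
    exact Option.some_injective _ hhead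
  have hlast' : L.getLast hne = rootConfig := by
    rw [List.getLast?_eq_getLast hne] at hlast
    exact Option.some_injective _ hlast
  have hcount := chain_card L hchain hne
  rw [hhead', hlast'] at hcount
  have hroot2 : (rootConfig).card = 2 := by
    rw [rootConfig]
    rw [Finset.card_insert_of_notMem (by simp), Finset.card_singleton]
  have hpos : 1 ≤ (leafPositions (node l r)).card := by
    obtain ⟨ℓ, hℓ, -⟩ := exists_leaf_below (S := node l r) (p := [])
      (by simp [isValidPos])
    exact Finset.card_pos.mpr ⟨ℓ, hℓ⟩
  rw [hroot2] at hcount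
  rw [numLeaves]
  omega
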